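/- In W = k[D] ⊗ Aₙ[v] (n ≥ 1), set V := v−D, Xᵢ := (v−D)ξᵢ, Pᵢ := ∂ᵢ. Then the induced locality function equals N₁, i.e.: N_W(V,V) = N_W(V,Xⱼ) = N_W(Xᵢ,V) = N_W(V,Pⱼ) = N_W(Xᵢ,Pⱼ) = 2 for all i,j; N_W(Xᵢ,Xⱼ) = 2 for i ≠ j and N_W(Xᵢ,Xᵢ) = 0; N_W(Pᵢ,V) = N_W(Pᵢ,Xⱼ) = 1 for all i,j; N_W(Pᵢ,Pⱼ) = 1 for i ≠ j and N_W(Pᵢ,Pᵢ) = 0. -/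

import Mathlib

/-! ### Conformal algebras: basic definitions -/

/-- A conformal algebra over a field `k`: a `k`-vector space with a linear map `D`
and a family of bilinear `n`-th products satisfying (C1) locality, (C2) and (C3). -/
structure ConfAlg (k : Type) [Field k] (C : Type) [AddCommGroup C] [Module k C] where
  Dmap : C →ₗ[k] C
  prod : ℕ → C →ₗ[k] C →ₗ[k] C
  locality : ∀ a b : C, ∃ N : ℕ, ∀ m, N ≤ m → prod m a b = 0
  axC2 : ∀ (m : ℕ) (a b : C), prod m (Dmap a) b = -((m : k)) • prod (m - 1) a b
  axC3 : ∀ (m : ℕ) (a b : C),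
    prod m a (Dmap b) = Dmap (prod m a b) + (m : k) • prod (m - 1) a b

section BasicDefs

variable {k : Type} [Field k] {C : Type} [AddCommGroup C] [Module k C]

/-- Left associativity identity for a conformal algebra. -/
def ConfAlg.IsAssoc (A : ConfAlg k C) : Prop :=
  ∀ (nn m : ℕ) (a b c : C),
    A.prod m (A.prod nn a b) c =
      ∑ s ∈ Finset.range (nn + 1),
        ((-1 : k) ^ s * (nn.choose s : k)) • A.prod (nn - s) a (A.prod (m + s) b c)

/-- A ℤ₂-grading of a conformal algebra: `grade false` is the even part,
`grade true` the odd part. -/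
structure ConfGrading (A : ConfAlg k C) where
  grade : Bool → Submodule k C
  inf_bot : grade false ⊓ grade true = ⊥
  sup_top : grade false ⊔ grade true = ⊤
  D_mem : ∀ (i : Bool), ∀ x ∈ grade i, A.Dmap x ∈ grade i
  prod_mem : ∀ (i j : Bool) (m : ℕ) (x y : C), x ∈ grade i → y ∈ grade j →
    A.prod m x y ∈ grade (xor i j)

/-- The "conjugate" product `{b ∘ₘ a} = ∑_{s ≥ 0} ((-1)^{m+s}/s!) • Dˢ (b ∘_{m+s} a)`,
a finite sum by locality, expressed via `finsum`. -/
noncomputable def cbrR (D : C →ₗ[k] C) (P : ℕ → C →ₗ[k] C →ₗ[k] C)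
    (m : ℕ) (b a : C) : C :=
  ∑ᶠ s : ℕ, ((-1 : k) ^ (m + s) * ((Nat.factorial s : k))⁻¹) • (D ^ s) (P (m + s) b a)

/-- The super-commutator `[a ∘ₘ b] = a ∘ₘ b - (-1)^{p(a)p(b)} {b ∘ₘ a}` for homogeneous
`a, b` of parities `pa, pb` (`false` = even, `true` = odd). -/
noncomputable def sbrR (D : C →ₗ[k] C) (P : ℕ → C →ₗ[k] C →ₗ[k] C)
    (pa pb : Bool) (m : ℕ) (a b : C) : C :=
  P m a b - (if pa && pb then (-1 : k) else 1) • cbrR D P m b a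

/-- The defining relations of the Lie conformal superalgebra `Wₙ`, for homogeneous
elements `V` (even), `X i`, `Pd i` (odd) of an associative conformal algebra with
derivation `D` and products `P`. -/
noncomputable def WRelsR (D : C →ₗ[k] C) (P : ℕ → C →ₗ[k] C →ₗ[k] C) {n : ℕ}
    (V : C) (X Pd : Fin n → C) : Prop :=
  (∀ i j, sbrR D P true true 0 (X i) (X j) = - sbrR D P true true 0 (X j) (X i)) ∧
  (∀ (m : ℕ) (i j), sbrR D P true true m (Pd i) (Pd j) = 0) ∧
  (∀ i j, sbrR D P true true 0 (Pd j) (X i) = if i = j then V else 0) ∧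
  (∀ i, sbrR D P false true 0 V (X i) = D (X i)) ∧
  (∀ i, sbrR D P true false 0 (X i) V = D (X i)) ∧
  (∀ i, sbrR D P true false 1 (X i) V = (2 : k) • X i) ∧
  (∀ j, sbrR D P true false 0 (Pd j) V = 0) ∧
  (∀ j, sbrR D P true false 1 (Pd j) V = Pd j) ∧
  (∀ i j, sbrR D P true true 0 (X i) (X j)
      = ((2 : k))⁻¹ • D (sbrR D P true true 1 (X i) (X j))) ∧
  (sbrR D P false false 0 V V = D V) ∧
  (sbrR D P false false 1 V V = (2 : k) • V) ∧
  (∀ m, 2 ≤ m →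
    (∀ i j, sbrR D P true true m (X i) (X j) = 0) ∧
    (∀ j, sbrR D P false true m V (Pd j) = 0) ∧
    (∀ i j, sbrR D P true true m (X i) (Pd j) = 0) ∧
    (∀ i, sbrR D P false true m V (X i) = 0) ∧
    sbrR D P false false m V V = 0)

end BasicDefs
set_option maxSynthPendingDepth 5

/-! ### The algebra `Aₙ` and the conformal algebra `W = k[D] ⊗ Aₙ[v]` -/

/-- Generators of the algebra `Aₙ`: `xi i` stands for `ξᵢ`, `pa i` for `∂ᵢ`. -/
inductive WGen (n : ℕ) : Type
  | xi : Fin n → WGen n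
  | pa : Fin n → WGen n

/-- The defining relations of `Aₙ`:
`ξᵢξⱼ + ξⱼξᵢ = 0`, `∂ᵢ∂ⱼ + ∂ⱼ∂ᵢ = 0`, `∂ᵢξⱼ + ξⱼ∂ᵢ = δᵢⱼ·1`. -/
inductive ARel (k : Type) [Field k] (n : ℕ) :
    FreeAlgebra k (WGen n) → FreeAlgebra k (WGen n) → Prop
  | xixi (i j : Fin n) : ARel k n
      (FreeAlgebra.ι k (WGen.xi i) * FreeAlgebra.ι k (WGen.xi j)
        + FreeAlgebra.ι k (WGen.xi j) * FreeAlgebra.ι k (WGen.xi i)) 0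
  | papa (i j : Fin n) : ARel k n
      (FreeAlgebra.ι k (WGen.pa i) * FreeAlgebra.ι k (WGen.pa j)
        + FreeAlgebra.ι k (WGen.pa j) * FreeAlgebra.ι k (WGen.pa i)) 0
  | paxi (i j : Fin n) : ARel k n
      (FreeAlgebra.ι k (WGen.pa i) * FreeAlgebra.ι k (WGen.xi j)
        + FreeAlgebra.ι k (WGen.xi j) * FreeAlgebra.ι k (WGen.pa i))
      (if i = j then 1 else 0)

/-- The algebra `Aₙ`. -/
abbrev An (k : Type) [Field k] (n : ℕ) := RingQuot (ARel k n)

/-- `Aₙ[v]`: polynomials over `Aₙ` in the variable `v` (= `Polynomial.X`). -/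
abbrev Av (k : Type) [Field k] (n : ℕ) := Polynomial (An k n)

/-- `W = k[D] ⊗ Aₙ[v]`, realized as polynomials in the (outer) variable `D`
with coefficients in `Aₙ[v]`; the element `Dᵗ ⊗ w` is `(monomial t) w`. -/
abbrev Wc (k : Type) [Field k] (n : ℕ) := Polynomial (Av k n)

/-- The generator `ξᵢ ∈ Aₙ`. -/
noncomputable def xg (k : Type) [Field k] (n : ℕ) (i : Fin n) : An k n :=
  RingQuot.mkAlgHom k (ARel k n) (FreeAlgebra.ι k (WGen.xi i))

/-- The generator `∂ᵢ ∈ Aₙ`. -/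
noncomputable def dg (k : Type) [Field k] (n : ℕ) (i : Fin n) : An k n :=
  RingQuot.mkAlgHom k (ARel k n) (FreeAlgebra.ι k (WGen.pa i))

/-- The element `v = 1 ⊗ v ∈ W`. -/
noncomputable def vW (k : Type) [Field k] (n : ℕ) : Wc k n :=
  Polynomial.C Polynomial.X

/-- The element `ξᵢ = 1 ⊗ ξᵢ ∈ W`. -/
noncomputable def xiW (k : Type) [Field k] (n : ℕ) (i : Fin n) : Wc k n :=
  Polynomial.C (Polynomial.C (xg k n i))

/-- The element `∂ᵢ = 1 ⊗ ∂ᵢ ∈ W`. -/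
noncomputable def paW (k : Type) [Field k] (n : ℕ) (i : Fin n) : Wc k n :=
  Polynomial.C (Polynomial.C (dg k n i))

/-- The element `v - D = 1 ⊗ v - D ⊗ 1 ∈ W`. -/
noncomputable def vmD (k : Type) [Field k] (n : ℕ) : Wc k n :=
  (Polynomial.C (Polynomial.X : Av k n) : Wc k n) - (Polynomial.X : Wc k n)

/-- The map `D` on `W`: multiplication by the outer variable. -/
noncomputable def Dm (k : Type) [Field k] (n : ℕ) : Wc k n →ₗ[k] Wc k n :=
  LinearMap.mulLeft k (Polynomial.X : Wc k n)

/-- The condition characterizing the conformal products of `W`: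
`(1 ⊗ f) ∘ₘ (1 ⊗ g) = 1 ⊗ f·(∂ᵐ g/∂vᵐ)` together with axioms (C2) and (C3). -/
def IsWProd (k : Type) [Field k] (n : ℕ)
    (P : ℕ → Wc k n →ₗ[k] Wc k n →ₗ[k] Wc k n) : Prop :=
  (∀ (m : ℕ) (f g : Av k n),
      P m (Polynomial.C f) (Polynomial.C g)
        = Polynomial.C (f * (fun q => Polynomial.derivative q)^[m] g)) ∧
  (∀ (m : ℕ) (a b : Wc k n), P m (Dm k n a) b = -((m : k)) • P (m - 1) a b) ∧
  (∀ (m : ℕ) (a b : Wc k n),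
      P m a (Dm k n b) = Dm k n (P m a b) + (m : k) • P (m - 1) a b)

/-- The locality function `N_W(x,y) = min {N | x ∘ₘ y = 0 for all m ≥ N}`. -/
noncomputable def locNW (k : Type) [Field k] (n : ℕ)
    (P : ℕ → Wc k n →ₗ[k] Wc k n →ₗ[k] Wc k n) (x y : Wc k n) : ℕ :=
  sInf {N : ℕ | ∀ m, N ≤ m → P m x y = 0}

/-- The smallest `D`-invariant subspace of `W` closed under all the products and
containing a set `S`. -/
noncomputable def confCl (k : Type) [Field k] (n : ℕ)
    (P : ℕ → Wc k n →ₗ[k] Wc k n →ₗ[k] Wc k n) (S : Set (Wc k n)) :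
    Submodule k (Wc k n) :=
  sInf {U : Submodule k (Wc k n) | S ⊆ U ∧ (∀ x ∈ U, Dm k n x ∈ U) ∧
    ∀ (m : ℕ), ∀ x ∈ U, ∀ y ∈ U, P m x y ∈ U}

/-- The conformal subalgebra `C₁ ⊆ W`, generated by `v - D`, `(v - D)ξᵢ`, `∂ᵢ`. -/
noncomputable def C1sub (k : Type) [Field k] (n : ℕ)
    (P : ℕ → Wc k n →ₗ[k] Wc k n →ₗ[k] Wc k n) : Submodule k (Wc k n) :=
  confCl k n P
    ({vmD k n} ∪ Set.range (fun i => vmD k n * xiW k n i) ∪ Set.range (paW k n))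

/-- The conformal subalgebra `C₂ ⊆ W`, generated by `v`, `vξᵢ`, `∂ᵢ`. -/
noncomputable def C2sub (k : Type) [Field k] (n : ℕ)
    (P : ℕ → Wc k n →ₗ[k] Wc k n →ₗ[k] Wc k n) : Submodule k (Wc k n) :=
  confCl k n P
    ({vW k n} ∪ Set.range (fun i => vW k n * xiW k n i) ∪ Set.range (paW k n))

set_option synthInstance.maxHeartbeats 1000000

/-! ### Auxiliary: a representation of `Aₙ` on the exterior algebra -/

section RepAux
variable (k : Type) [Field k] (n : ℕ)

noncomputable abbrev QF : QuadraticForm k (Fin n → k) := 0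

noncomputable def eE (i : Fin n) : CliffordAlgebra (QF k n) :=
  CliffordAlgebra.ι (QF k n) (Pi.single i 1)

noncomputable def ctr (i : Fin n) :
    CliffordAlgebra (QF k n) →ₗ[k] CliffordAlgebra (QF k n) :=
  CliffordAlgebra.contractLeft (LinearMap.proj i)

lemma ctr_eE_mul (i j : Fin n) (b : CliffordAlgebra (QF k n)) :
    ctr k n i (eE k n j * b)
      = (if i = j then (1:k) else 0) • b - eE k n j * ctr k n i b := by
  rw [eE, ctr, CliffordAlgebra.contractLeft_ι_mul]
  congr 1
  simp only [LinearMap.proj_apply, Pi.single_apply]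

lemma ctr_one (i : Fin n) : ctr k n i (1 : CliffordAlgebra (QF k n)) = 0 :=
  CliffordAlgebra.contractLeft_one _ _

lemma ctr_e (i j : Fin n) : ctr k n i (eE k n j) = if i = j then 1 else 0 := by
  have := ctr_eE_mul k n i j 1
  rw [mul_one, ctr_one, mul_zero, sub_zero] at this
  rw [this]
  split <;> simp

lemma ctr_comm (i j : Fin n) (z : CliffordAlgebra (QF k n)) :
    ctr k n i (ctr k n j z) = - ctr k n j (ctr k n i z) :=
  CliffordAlgebra.contractLeft_comm _ _ _

lemma e_mul_e (i j : Fin n) : eE k n i * eE k n j + eE k n j * eE k n i = 0 := by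
  simp only [eE]
  rw [CliffordAlgebra.ι_mul_ι_add_swap]
  simp [QuadraticMap.polar]

lemma eE_ne (i : Fin n) : eE k n i ≠ 0 := by
  rw [eE]
  intro h
  rw [ExteriorAlgebra.ι_eq_zero_iff] at h
  have := congrFun h i
  simp at this

lemma eE_mul_eE_ne (i j : Fin n) (hij : i ≠ j) : eE k n i * eE k n j ≠ 0 := by
  intro h
  have h2 : ctr k n j (ctr k n i (eE k n i * eE k n j)) = 1 := by
    rw [ctr_eE_mul, if_pos rfl, one_smul, ctr_e, if_neg hij, mul_zero, sub_zero,
      ctr_e, if_pos rfl]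
  rw [h, map_zero, map_zero] at h2
  exact one_ne_zero h2.symm

noncomputable def repGen : WGen n → Module.End k (CliffordAlgebra (QF k n))
  | .xi i => LinearMap.mulLeft k (eE k n i)
  | .pa i => ctr k n i

noncomputable def repF :
    FreeAlgebra k (WGen n) →ₐ[k] Module.End k (CliffordAlgebra (QF k n)) :=
  FreeAlgebra.lift k (repGen k n)

lemma repF_rel : ∀ ⦃x y⦄, ARel k n x y → repF k n x = repF k n y := by
  intro x y h
  induction h with
  | xixi i j =>
      simp only [repF, map_add, map_mul, map_zero, FreeAlgebra.lift_ι_apply, repGen]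
      refine LinearMap.ext fun z => ?_
      simp only [LinearMap.add_apply, Module.End.mul_apply, LinearMap.mulLeft_apply,
        LinearMap.zero_apply, ← mul_assoc, ← add_mul]
      rw [e_mul_e, zero_mul]
  | papa i j =>
      simp only [repF, map_add, map_mul, map_zero, FreeAlgebra.lift_ι_apply, repGen]
      refine LinearMap.ext fun z => ?_
      simp only [LinearMap.add_apply, Module.End.mul_apply, LinearMap.zero_apply]
      rw [ctr_comm, neg_add_cancel]
  | paxi i j =>
      refine LinearMap.ext fun z => ?_
      simp only [repF, map_add, map_mul, FreeAlgebra.lift_ι_apply, repGen,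
        LinearMap.add_apply, Module.End.mul_apply, LinearMap.mulLeft_apply]
      rw [ctr_eE_mul, sub_add_cancel]
      by_cases h : i = j
      · subst h
        simp
      · rw [if_neg h, if_neg h, zero_smul, map_zero, LinearMap.zero_apply]

noncomputable def repA : An k n →ₐ[k] Module.End k (CliffordAlgebra (QF k n)) :=
  RingQuot.liftAlgHom k ⟨repF k n, repF_rel k n⟩

lemma repA_xg (i : Fin n) : repA k n (xg k n i) = LinearMap.mulLeft k (eE k n i) := by
  rw [xg, repA, RingQuot.liftAlgHom_mkAlgHom_apply, repF, FreeAlgebra.lift_ι_apply, repGen]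

lemma repA_dg (i : Fin n) : repA k n (dg k n i) = ctr k n i := by
  rw [dg, repA, RingQuot.liftAlgHom_mkAlgHom_apply, repF, FreeAlgebra.lift_ι_apply, repGen]

instance : Nontrivial (An k n) := by
  refine nontrivial_of_ne 1 0 fun h => ?_
  have h2 := congrArg (repA k n) h
  rw [map_one, map_zero] at h2
  have h3 := congrFun (congrArg DFunLike.coe h2) 1
  simp only [Module.End.one_apply, LinearMap.zero_apply] at h3
  exact one_ne_zero h3

lemma ne_zero_of_rep (a : An k n) (z : CliffordAlgebra (QF k n))
    (h : repA k n a z ≠ 0) : a ≠ 0 := by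
  intro ha; rw [ha, map_zero, LinearMap.zero_apply] at h; exact h rfl

lemma xg_ne (i : Fin n) : xg k n i ≠ 0 := by
  refine ne_zero_of_rep k n _ 1 ?_
  rw [repA_xg, LinearMap.mulLeft_apply, mul_one]
  exact eE_ne k n i

lemma dg_ne (i : Fin n) : dg k n i ≠ 0 := by
  refine ne_zero_of_rep k n _ (eE k n i) ?_
  rw [repA_dg, ctr_e, if_pos rfl]
  exact one_ne_zero

lemma xg_mul_dg_ne (i j : Fin n) : xg k n i * dg k n j ≠ 0 := by
  refine ne_zero_of_rep k n _ (eE k n j) ?_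
  rw [map_mul, Module.End.mul_apply, repA_dg, ctr_e, if_pos rfl, repA_xg,
    LinearMap.mulLeft_apply, mul_one]
  exact eE_ne k n i

lemma xg_mul_xg_ne (i j : Fin n) (hij : i ≠ j) : xg k n i * xg k n j ≠ 0 := by
  refine ne_zero_of_rep k n _ 1 ?_
  rw [map_mul, Module.End.mul_apply, repA_xg, repA_xg, LinearMap.mulLeft_apply,
    LinearMap.mulLeft_apply, mul_one]
  exact eE_mul_eE_ne k n i j hij

lemma dg_mul_dg_ne (i j : Fin n) (hij : i ≠ j) : dg k n i * dg k n j ≠ 0 := by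
  refine ne_zero_of_rep k n _ (eE k n j * eE k n i) ?_
  rw [map_mul (repA k n), Module.End.mul_apply, repA_dg, repA_dg]
  rw [ctr_eE_mul, if_pos rfl, one_smul, ctr_e, if_neg (fun h => hij h.symm), mul_zero,
    sub_zero, ctr_e, if_pos rfl]
  exact one_ne_zero

lemma dg_mul_xg_ne (i j : Fin n) : dg k n i * xg k n j ≠ 0 := by
  by_cases h : i = j
  · subst h
    refine ne_zero_of_rep k n _ 1 ?_
    rw [map_mul, Module.End.mul_apply, repA_xg, repA_dg, LinearMap.mulLeft_apply, mul_one,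
      ctr_e, if_pos rfl]
    exact one_ne_zero
  · refine ne_zero_of_rep k n _ (eE k n i) ?_
    rw [map_mul, Module.End.mul_apply, repA_xg, repA_dg, LinearMap.mulLeft_apply]
    rw [ctr_eE_mul, if_neg h, zero_smul, ctr_e, if_pos rfl, mul_one, zero_sub, neg_ne_zero]
    exact eE_ne k n j

variable [CharZero k]

lemma xg_sq (i : Fin n) : xg k n i * xg k n i = 0 := by
  have h := RingQuot.mkAlgHom_rel k (ARel.xixi (k := k) (n := n) i i)
  simp only [map_add, map_mul, map_zero] at h
  have h2 : (2 : k) • (xg k n i * xg k n i) = 0 := by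
    rw [two_smul]; exact h
  have h3 : (2 : k) ≠ 0 := by norm_num
  rcases smul_eq_zero.mp h2 with h4 | h4
  · exact absurd h4 h3
  · exact h4

lemma dg_sq (i : Fin n) : dg k n i * dg k n i = 0 := by
  have h := RingQuot.mkAlgHom_rel k (ARel.papa (k := k) (n := n) i i)
  simp only [map_add, map_mul, map_zero] at h
  have h2 : (2 : k) • (dg k n i * dg k n i) = 0 := by
    rw [two_smul]; exact h
  have h3 : (2 : k) ≠ 0 := by norm_num
  rcases smul_eq_zero.mp h2 with h4 | h4
  · exact absurd h4 h3
  · exact h4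

end RepAux

/-! ### Auxiliary: computation of the conformal products in `W` -/

section ProdAux
open Polynomial
variable {k : Type} [Field k] [CharZero k] {n : ℕ}

local notation "dd" => fun q : Av k n => derivative q

-- derivative facts
lemma dXC' (a : An k n) : derivative ((X : Av k n) * C a) = C a := by
  rw [X_mul_C, C_mul_X_eq_monomial, derivative_monomial]
  simp

lemma dpow_const' {g : Av k n} (hg : derivative g = 0) :
    ∀ m, 1 ≤ m → (dd)^[m] g = 0 := by
  intro m hm
  obtain ⟨s, rfl⟩ := Nat.exists_eq_add_of_le hm
  rw [add_comm, Function.iterate_add_apply, Function.iterate_one]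
  show (dd)^[s] (derivative g) = 0
  rw [hg]
  exact Function.iterate_fixed (map_zero _) s

lemma dpow_lin' {f g : Av k n} (hf : derivative f = g) (hg : derivative g = 0) :
    ∀ m, 2 ≤ m → (dd)^[m] f = 0 := by
  intro m hm
  obtain ⟨s, rfl⟩ := Nat.exists_eq_add_of_le hm
  rw [add_comm, Function.iterate_add_apply]
  rw [show (dd)^[2] f = 0 by
    rw [Function.iterate_succ_apply]
    show (dd)^[1] (derivative f) = 0
    rw [hf, Function.iterate_one]
    exact hg]
  exact Function.iterate_fixed (map_zero _) s

-- ring facts in Av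
lemma CmulX (a b : An k n) : (C a : Av k n) * (X * C b) = X * C (a * b) := by
  rw [← mul_assoc, ← X_mul_C a, mul_assoc, ← map_mul]

lemma XCmulC (a b : An k n) : ((X : Av k n) * C a) * C b = X * C (a * b) := by
  rw [mul_assoc, ← map_mul]

lemma XCmulXC (a b : An k n) : ((X : Av k n) * C a) * (X * C b) = X * (X * C (a * b)) := by
  rw [mul_assoc, CmulX]

-- nonzero facts
lemma X_ne' : (X : Av k n) ≠ 0 := X_ne_zero

lemma XC_ne {a : An k n} (ha : a ≠ 0) : (X : Av k n) * C a ≠ 0 := by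
  rw [X_mul_C, C_mul_X_eq_monomial]
  intro h
  exact ha (by simpa using h)

lemma C_ne' {a : An k n} (ha : a ≠ 0) : (C a : Av k n) ≠ 0 := fun h => ha (C_eq_zero.mp h)

lemma W_ne (a b : Av k n) (ha : a ≠ 0) : (C a - X * C b : Wc k n) ≠ 0 := by
  intro h
  have h0 := congrArg (fun p : Wc k n => p.coeff 0) h
  simp only [coeff_sub, coeff_zero, coeff_C_zero, mul_coeff_zero, coeff_X_zero,
    zero_mul, sub_zero] at h0
  exact ha h0

-- normal forms
lemma nVmD : vmD k n = C (X : Av k n) - X * C 1 := by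
  rw [vmD, map_one, mul_one]

lemma nXi (i : Fin n) :
    vmD k n * xiW k n i = C ((X : Av k n) * C (xg k n i)) - X * C (C (xg k n i)) := by
  rw [vmD, xiW, sub_mul, ← map_mul]

lemma nPa (j : Fin n) : paW k n j = C (C (dg k n j) : Av k n) - X * C 0 := by
  rw [paW, map_zero, mul_zero, sub_zero]

variable (Pr : ℕ → Wc k n →ₗ[k] Wc k n →ₗ[k] Wc k n) (hPr : IsWProd k n Pr)

lemma dm_apply' (a : Wc k n) : Dm k n a = X * a := rfl

include hPr in
lemma prod_C_X (m : ℕ) (f g : Av k n) :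
    Pr m (C f) (X * C g)
      = X * C (f * (dd)^[m] g) + (m : k) • C (f * (dd)^[m-1] g) := by
  obtain ⟨hA, hB, hC⟩ := hPr
  have h := hC m (C f) (C g)
  rw [dm_apply', dm_apply'] at h
  rw [h, hA, hA]

include hPr in
lemma prod_X_C (m : ℕ) (f g : Av k n) :
    Pr m (X * C f) (C g) = -((m : k)) • C (f * (dd)^[m-1] g) := by
  obtain ⟨hA, hB, hC⟩ := hPr
  have h := hB m (C f) (C g)
  rw [dm_apply'] at h
  rw [h, hA]

include hPr in
lemma prod_X_X (m : ℕ) (f g : Av k n) :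
    Pr m (X * C f) (X * C g)
      = -((m : k)) • (X * C (f * (dd)^[m-1] g)
          + (((m-1 : ℕ)) : k) • C (f * (dd)^[m-1-1] g)) := by
  have h := hPr.2.1 m (C f) (X * C g)
  rw [dm_apply'] at h
  rw [h, prod_C_X Pr hPr]

include hPr in
lemma master (m : ℕ) (f₁ g₁ f₂ g₂ : Av k n) (a b : Wc k n)
    (ha : a = C f₁ - X * C g₁) (hb : b = C f₂ - X * C g₂) :
    Pr m a b
      = C (f₁ * (dd)^[m] f₂)
        - (X * C (f₁ * (dd)^[m] g₂) + (m : k) • C (f₁ * (dd)^[m-1] g₂))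
        - (-((m : k)) • C (g₁ * (dd)^[m-1] f₂))
        + (-((m : k)) • (X * C (g₁ * (dd)^[m-1] g₂)
            + (((m-1 : ℕ)) : k) • C (g₁ * (dd)^[m-1-1] g₂))) := by
  subst ha hb
  simp only [map_sub, LinearMap.sub_apply]
  rw [hPr.1, prod_C_X Pr hPr, prod_X_C Pr hPr, prod_X_X Pr hPr]
  abel

include hPr in
lemma M0 (f₁ g₁ f₂ g₂ : Av k n) (a b : Wc k n)
    (ha : a = C f₁ - X * C g₁) (hb : b = C f₂ - X * C g₂) :
    Pr 0 a b = C (f₁ * f₂) - X * C (f₁ * g₂) := by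
  rw [master Pr hPr 0 f₁ g₁ f₂ g₂ a b ha hb]
  simp

include hPr in
lemma M1 (f₁ g₁ f₂ g₂ : Av k n) (a b : Wc k n)
    (ha : a = C f₁ - X * C g₁) (hb : b = C f₂ - X * C g₂)
    (hf₂ : derivative f₂ = g₂) (hg₂ : derivative g₂ = 0) :
    Pr 1 a b = C (g₁ * f₂) - X * C (g₁ * g₂) := by
  rw [master Pr hPr 1 f₁ g₁ f₂ g₂ a b ha hb]
  simp only [Function.iterate_one, Nat.sub_self, Function.iterate_zero, id_eq,
    Nat.cast_one, hf₂, hg₂, mul_zero, map_zero, Nat.cast_zero, zero_smul, add_zero,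
    one_smul, neg_smul, neg_neg, zero_mul, neg_zero]
  module

include hPr in
lemma Mge2 (f₁ g₁ f₂ g₂ : Av k n) (a b : Wc k n)
    (ha : a = C f₁ - X * C g₁) (hb : b = C f₂ - X * C g₂)
    (hf₂ : derivative f₂ = g₂) (hg₂ : derivative g₂ = 0) :
    ∀ m, 2 ≤ m → Pr m a b = 0 := by
  intro m hm
  rw [master Pr hPr m f₁ g₁ f₂ g₂ a b ha hb]
  rcases eq_or_lt_of_le hm with h2 | h3
  · subst h2
    have e1 : (dd)^[2] f₂ = 0 := dpow_lin' hf₂ hg₂ 2 le_rfl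
    have e2 : (dd)^[2] g₂ = 0 := dpow_const' hg₂ 2 (by norm_num)
    have e3 : (dd)^[2-1] g₂ = 0 := dpow_const' hg₂ 1 le_rfl
    have e4 : (dd)^[2-1] f₂ = g₂ := hf₂
    rw [e1, e2, e3, e4]
    simp only [show (2-1-1 : ℕ) = 0 from rfl, Function.iterate_zero, id_eq,
      mul_zero, map_zero, zero_mul, smul_zero, add_zero, zero_add,
      sub_zero, zero_sub, neg_neg]
    norm_num
  · have e1 : (dd)^[m] f₂ = 0 := dpow_lin' hf₂ hg₂ m (by omega)
    have e2 : (dd)^[m] g₂ = 0 := dpow_const' hg₂ m (by omega)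
    have e3 : (dd)^[m-1] g₂ = 0 := dpow_const' hg₂ (m-1) (by omega)
    have e4 : (dd)^[m-1] f₂ = 0 := dpow_lin' hf₂ hg₂ (m-1) (by omega)
    have e5 : (dd)^[m-1-1] g₂ = 0 := dpow_const' hg₂ (m-1-1) (by omega)
    rw [e1, e2, e3, e4, e5]
    simp

-- locality-function helpers
lemma locNW_eq_of (x y : Wc k n) (N : ℕ) (hN : 0 < N)
    (hvan : ∀ m, N ≤ m → Pr m x y = 0) (hnz : Pr (N-1) x y ≠ 0) :
    locNW k n Pr x y = N := by
  rw [locNW]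
  apply le_antisymm
  · exact Nat.sInf_le hvan
  · refine le_csInf ⟨N, hvan⟩ ?_
    intro b hb
    by_contra hlt
    push_neg at hlt
    exact hnz (hb (N-1) (by omega))

lemma locNW_eq_zero (x y : Wc k n) (hvan : ∀ m, Pr m x y = 0) :
    locNW k n Pr x y = 0 :=
  Nat.sInf_eq_zero.mpr (Or.inl fun m _ => hvan m)

end ProdAux

/-- the locality function induced by `φ₁` on the generators equals `N₁`. -/
theorem stmt_5 (k : Type) [Field k] [CharZero k] (n : ℕ) (hn : 1 ≤ n)
    (Pr : ℕ → Wc k n →ₗ[k] Wc k n →ₗ[k] Wc k n) (hPr : IsWProd k n Pr) :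
    locNW k n Pr (vmD k n) (vmD k n) = 2 ∧
    (∀ j, locNW k n Pr (vmD k n) (vmD k n * xiW k n j) = 2) ∧
    (∀ i, locNW k n Pr (vmD k n * xiW k n i) (vmD k n) = 2) ∧
    (∀ j, locNW k n Pr (vmD k n) (paW k n j) = 2) ∧
    (∀ i j, locNW k n Pr (vmD k n * xiW k n i) (paW k n j) = 2) ∧
    (∀ i j, i ≠ j → locNW k n Pr (vmD k n * xiW k n i) (vmD k n * xiW k n j) = 2) ∧
    (∀ i, locNW k n Pr (vmD k n * xiW k n i) (vmD k n * xiW k n i) = 0) ∧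
    (∀ i, locNW k n Pr (paW k n i) (vmD k n) = 1) ∧
    (∀ i j, locNW k n Pr (paW k n i) (vmD k n * xiW k n j) = 1) ∧
    (∀ i j, i ≠ j → locNW k n Pr (paW k n i) (paW k n j) = 1) ∧
    (∀ i, locNW k n Pr (paW k n i) (paW k n i) = 0) := by
  open Polynomial in
  refine ⟨?_, ?_, ?_, ?_, ?_, ?_, ?_, ?_, ?_, ?_, ?_⟩
  -- 1. N(V,V) = 2
  · refine locNW_eq_of Pr _ _ 2 (by norm_num)
      (Mge2 Pr hPr X 1 X 1 _ _ nVmD nVmD derivative_X derivative_one) ?_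
    rw [show (2-1:ℕ) = 1 from rfl,
      M1 Pr hPr X 1 X 1 _ _ nVmD nVmD derivative_X derivative_one, one_mul, mul_one]
    exact W_ne _ _ X_ne'
  -- 2. N(V,Xj) = 2
  · intro j
    refine locNW_eq_of Pr _ _ 2 (by norm_num)
      (Mge2 Pr hPr X 1 (X * C (xg k n j)) (C (xg k n j)) _ _ nVmD (nXi j)
        (dXC' _) derivative_C) ?_
    rw [show (2-1:ℕ) = 1 from rfl,
      M1 Pr hPr X 1 (X * C (xg k n j)) (C (xg k n j)) _ _ nVmD (nXi j)
        (dXC' _) derivative_C, one_mul, one_mul]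
    exact W_ne _ _ (XC_ne (xg_ne k n j))
  -- 3. N(Xi,V) = 2
  · intro i
    refine locNW_eq_of Pr _ _ 2 (by norm_num)
      (Mge2 Pr hPr (X * C (xg k n i)) (C (xg k n i)) X 1 _ _ (nXi i) nVmD
        derivative_X derivative_one) ?_
    rw [show (2-1:ℕ) = 1 from rfl,
      M1 Pr hPr (X * C (xg k n i)) (C (xg k n i)) X 1 _ _ (nXi i) nVmD
        derivative_X derivative_one, ← X_mul_C, mul_one]
    exact W_ne _ _ (XC_ne (xg_ne k n i))
  -- 4. N(V,Pj) = 2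
  · intro j
    refine locNW_eq_of Pr _ _ 2 (by norm_num)
      (Mge2 Pr hPr X 1 (C (dg k n j)) 0 _ _ nVmD (nPa j) derivative_C (map_zero _)) ?_
    rw [show (2-1:ℕ) = 1 from rfl,
      M1 Pr hPr X 1 (C (dg k n j)) 0 _ _ nVmD (nPa j) derivative_C (map_zero _),
      one_mul, one_mul]
    exact W_ne _ _ (C_ne' (dg_ne k n j))
  -- 5. N(Xi,Pj) = 2
  · intro i j
    refine locNW_eq_of Pr _ _ 2 (by norm_num)
      (Mge2 Pr hPr (X * C (xg k n i)) (C (xg k n i)) (C (dg k n j)) 0 _ _ (nXi i)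
        (nPa j) derivative_C (map_zero _)) ?_
    rw [show (2-1:ℕ) = 1 from rfl,
      M1 Pr hPr (X * C (xg k n i)) (C (xg k n i)) (C (dg k n j)) 0 _ _ (nXi i)
        (nPa j) derivative_C (map_zero _), ← map_mul, mul_zero]
    exact W_ne _ _ (C_ne' (xg_mul_dg_ne k n i j))
  -- 6. N(Xi,Xj) = 2 for i ≠ j
  · intro i j hij
    refine locNW_eq_of Pr _ _ 2 (by norm_num)
      (Mge2 Pr hPr (X * C (xg k n i)) (C (xg k n i)) (X * C (xg k n j)) (C (xg k n j))
        _ _ (nXi i) (nXi j) (dXC' _) derivative_C) ?_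
    rw [show (2-1:ℕ) = 1 from rfl,
      M1 Pr hPr (X * C (xg k n i)) (C (xg k n i)) (X * C (xg k n j)) (C (xg k n j))
        _ _ (nXi i) (nXi j) (dXC' _) derivative_C, CmulX, ← map_mul]
    exact W_ne _ _ (XC_ne (xg_mul_xg_ne k n i j hij))
  -- 7. N(Xi,Xi) = 0
  · intro i
    refine locNW_eq_zero Pr _ _ ?_
    intro m
    rcases m with _ | _ | m
    · rw [M0 Pr hPr (X * C (xg k n i)) (C (xg k n i)) (X * C (xg k n i)) (C (xg k n i))
        _ _ (nXi i) (nXi i), XCmulXC, XCmulC, xg_sq]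
      simp
    · rw [M1 Pr hPr (X * C (xg k n i)) (C (xg k n i)) (X * C (xg k n i)) (C (xg k n i))
        _ _ (nXi i) (nXi i) (dXC' _) derivative_C, CmulX, ← map_mul, xg_sq]
      simp
    · exact Mge2 Pr hPr (X * C (xg k n i)) (C (xg k n i)) (X * C (xg k n i))
        (C (xg k n i)) _ _ (nXi i) (nXi i) (dXC' _) derivative_C (m+2) (by omega)
  -- 8. N(Pi,V) = 1
  · intro i
    refine locNW_eq_of Pr _ _ 1 (by norm_num) ?_ ?_
    · intro m hm
      rcases eq_or_lt_of_le hm with h | h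
      · rw [← h, M1 Pr hPr (C (dg k n i)) 0 X 1 _ _ (nPa i) nVmD
          derivative_X derivative_one]
        simp
      · exact Mge2 Pr hPr (C (dg k n i)) 0 X 1 _ _ (nPa i) nVmD
          derivative_X derivative_one m (by omega)
    · rw [show (1-1:ℕ) = 0 from rfl,
        M0 Pr hPr (C (dg k n i)) 0 X 1 _ _ (nPa i) nVmD, ← X_mul_C, mul_one]
      exact W_ne _ _ (XC_ne (dg_ne k n i))
  -- 9. N(Pi,Xj) = 1
  · intro i j
    refine locNW_eq_of Pr _ _ 1 (by norm_num) ?_ ?_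
    · intro m hm
      rcases eq_or_lt_of_le hm with h | h
      · rw [← h, M1 Pr hPr (C (dg k n i)) 0 (X * C (xg k n j)) (C (xg k n j)) _ _
          (nPa i) (nXi j) (dXC' _) derivative_C]
        simp
      · exact Mge2 Pr hPr (C (dg k n i)) 0 (X * C (xg k n j)) (C (xg k n j)) _ _
          (nPa i) (nXi j) (dXC' _) derivative_C m (by omega)
    · rw [show (1-1:ℕ) = 0 from rfl,
        M0 Pr hPr (C (dg k n i)) 0 (X * C (xg k n j)) (C (xg k n j)) _ _
          (nPa i) (nXi j), CmulX, ← map_mul]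
      exact W_ne _ _ (XC_ne (dg_mul_xg_ne k n i j))
  -- 10. N(Pi,Pj) = 1 for i ≠ j
  · intro i j hij
    refine locNW_eq_of Pr _ _ 1 (by norm_num) ?_ ?_
    · intro m hm
      rcases eq_or_lt_of_le hm with h | h
      · rw [← h, M1 Pr hPr (C (dg k n i)) 0 (C (dg k n j)) 0 _ _
          (nPa i) (nPa j) derivative_C (map_zero _)]
        simp
      · exact Mge2 Pr hPr (C (dg k n i)) 0 (C (dg k n j)) 0 _ _
          (nPa i) (nPa j) derivative_C (map_zero _) m (by omega)
    · rw [show (1-1:ℕ) = 0 from rfl,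
        M0 Pr hPr (C (dg k n i)) 0 (C (dg k n j)) 0 _ _ (nPa i) (nPa j),
        ← map_mul, mul_zero]
      exact W_ne _ _ (C_ne' (dg_mul_dg_ne k n i j hij))
  -- 11. N(Pi,Pi) = 0
  · intro i
    refine locNW_eq_zero Pr _ _ ?_
    intro m
    rcases m with _ | _ | m
    · rw [M0 Pr hPr (C (dg k n i)) 0 (C (dg k n i)) 0 _ _ (nPa i) (nPa i),
        ← map_mul, dg_sq]
      simp
    · rw [M1 Pr hPr (C (dg k n i)) 0 (C (dg k n i)) 0 _ _ (nPa i) (nPa i)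
        derivative_C (map_zero _)]
      simp
    · exact Mge2 Pr hPr (C (dg k n i)) 0 (C (dg k n i)) 0 _ _ (nPa i) (nPa i)
        derivative_C (map_zero _) (m+2) (by omega)
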